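/- arXiv:1404.5221 — 2 statements merged into one kernel-verified Lean document; each statement's English description precedes it below -/
import Mathlib

section
/- Consider the error scheme: grid functions z^0, z^1, …, z^M in the space V of real vectors (z_0, …, z_N) with z_0 = z_N = 0, where z^0 = 0, weights g_s^{j+1} (0 ≤ s ≤ j ≤ M−1) satisfying g_j^{j+1} > g_{j-1}^{j+1} > … > g_0^{j+1} ≥ c₂ > 0 for each j, parameters σ_{j+1} with g_j^{j+1}/(2 g_j^{j+1} − g_{j-1}^{j+1}) ≤ σ_{j+1} ≤ 1 (with g_{-1}^{1} = 0), a linear operator Λ : V → V with (−Λ z, z) ≥ κ ‖z‖₀² for some κ > 0, and residuals ψ^{1}, …, ψ^{M} ∈ V. Suppose Σ_{s=0}^{j} (z^{s+1} − z^s) g_s^{j+1} = Λ(σ_{j+1} z^{j+1} + (1 − σ_{j+1}) z^{j}) + ψ^{j+1} for every j = 0, …, M−1, and suppose ‖ψ^{k}‖₀ ≤ C (N^{−r₁} + M^{−r₂}) for all k and some constant C > 0 and positive reals r₁, r₂. Then ‖z^{j+1}‖₀ ≤ (2 κ c₂)^{−1/2} · max_{1 ≤ k ≤ M} ‖ψ^{k}‖₀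 ≤ C (2 κ c₂)^{−1/2} (N^{−r₁} + M^{−r₂}) for every 0 ≤ j ≤ M−1. -/
open Finset

/-- The discrete inner product `(u, w) = Σ_{i=1}^{N-1} u_i w_i h` on grid functions. -/
noncomputable def gridInner (h : ℝ) (N : ℕ) (u w : ℕ → ℝ) : ℝ :=
  ∑ i ∈ Finset.Ico 1 N, u i * w i * h

lemma abel_sum (g f : ℕ → ℝ) (n : ℕ) :
    ∑ s ∈ Finset.range n, g s * (f s - f (s+1)) =
      g 0 * f 0 - g n * f n + ∑ s ∈ Finset.range n, (g (s+1) - g s) * f (s+1) := by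
  induction n with
  | zero => simp
  | succ n ih => rw [Finset.sum_range_succ, ih, Finset.sum_range_succ]; ring

set_option maxHeartbeats 1000000 in
lemma scalar_key (j : ℕ) (g : ℕ → ℝ) (σ : ℝ) (y : ℕ → ℝ)
    (hmono : ∀ s < j, g s < g (s+1)) (hg0 : 0 < g 0)
    (hσl : g j / (2 * g j - (if j = 0 then 0 else g (j-1))) ≤ σ) (hσu : σ ≤ 1) :
    (1/2) * ∑ s ∈ Finset.range (j+1), g s * ((y (s+1))^2 - (y s)^2) ≤
      (∑ s ∈ Finset.range (j+1), (y (s+1) - y s) * g s) * (σ * y (j+1) + (1-σ) * y j) := by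
  have hbase : ∀ t ≤ j, g 0 ≤ g t := by
    intro t
    induction t with
    | zero => intro _; exact le_rfl
    | succ t ih => intro ht; exact le_trans (ih (by omega)) (le_of_lt (hmono t (by omega)))
  set x : ℝ := y (j+1) - y j with hx
  set S : ℕ → ℝ := fun s => y j - y s with hS
  -- T : the weighted sum of increments
  set T : ℝ := ∑ s ∈ Finset.range (j+1), (y (s+1) - y s) * g s with hT
  set U : ℝ := ∑ s ∈ Finset.range (j+1), g s * (S s ^ 2 - S (s+1) ^ 2) with hU
  have hTeq : T = g 0 * S 0 + g j * x + ∑ s ∈ Finset.range j, (g (s+1) - g s) * S (s+1) := by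
    have h1 : T = ∑ s ∈ Finset.range (j+1), g s * (S s - S (s+1)) := by
      rw [hT]; exact Finset.sum_congr rfl fun s _ => by simp [hS]; ring
    rw [h1, abel_sum, Finset.sum_range_succ]
    have : S (j+1) = -x := by simp only [hS, hx]; ring
    rw [this]; ring
  have hUeq : U = g 0 * S 0 ^ 2 - g j * x ^ 2 +
      ∑ s ∈ Finset.range j, (g (s+1) - g s) * S (s+1) ^ 2 := by
    rw [hU, abel_sum (f := fun s => S s ^ 2), Finset.sum_range_succ]
    have : S (j+1) = -x := by simp only [hS, hx]; ring
    rw [this]; ring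
  have hrel : ∑ s ∈ Finset.range (j+1), g s * ((y (s+1))^2 - (y s)^2)
      = 2 * y j * T - U := by
    rw [hT, hU, Finset.mul_sum, ← Finset.sum_sub_distrib]
    exact Finset.sum_congr rfl fun s _ => by simp [hS]; ring
  have hmult : σ * y (j+1) + (1-σ) * y j = y j + σ * x := by rw [hx]; ring
  rw [hrel, hmult]
  -- reduce to 0 ≤ σ * x * T + (1/2) * U
  have hred : ∀ Q : ℝ, 0 ≤ σ * x * T + (1/2) * U →
      (1/2) * (2 * y j * T - U) ≤ T * (y j + σ * x) := by
    intro _ hQ; nlinarith [hQ]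
  apply hred 0
  -- the sum-of-squares identity
  have hsq : ∑ s ∈ Finset.range j, (1/2) * (g (s+1) - g s) * (S (s+1) + σ * x)^2
      = (1/2) * (∑ s ∈ Finset.range j, (g (s+1) - g s) * S (s+1)^2)
        + σ * x * (∑ s ∈ Finset.range j, (g (s+1) - g s) * S (s+1))
        + (1/2) * σ^2 * x^2 * (g j - g 0) := by
    rw [← Finset.sum_range_sub g j, Finset.mul_sum, Finset.mul_sum, Finset.mul_sum,
      ← Finset.sum_add_distrib, ← Finset.sum_add_distrib]
    exact Finset.sum_congr rfl fun s _ => by ring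
  have hiden : σ * x * T + (1/2) * U
      = (1/2) * g 0 * (S 0 + σ * x)^2
        + (∑ s ∈ Finset.range j, (1/2) * (g (s+1) - g s) * (S (s+1) + σ * x)^2)
        + (σ - 1/2 - (1/2) * σ^2) * g j * x^2 := by
    rw [hsq, hTeq, hUeq]; ring
  have hSj : ∀ t, S t = y j - y t := fun t => rfl
  rw [hiden]
  clear_value S x T U
  rcases Nat.eq_zero_or_pos j with hj0 | hjpos
  · subst hj0
    simp only [Finset.range_zero, Finset.sum_empty, add_zero]
    have hS0 : S 0 = 0 := by rw [hSj]; ring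
    have hσhalf : (1:ℝ)/2 ≤ σ := by
      rw [if_pos rfl, sub_zero] at hσl
      calc (1:ℝ)/2 = g 0 / (2 * g 0) := by field_simp
      _ ≤ σ := hσl
    rw [hS0]
    nlinarith [mul_nonneg (mul_nonneg (show (0:ℝ) ≤ σ - 1/2 by linarith) hg0.le) (sq_nonneg x)]
  · -- j = m + 1
    obtain ⟨m, rfl⟩ : ∃ m, j = m + 1 := ⟨j - 1, by omega⟩
    rw [Finset.sum_range_succ]
    rw [show S (m+1) = 0 by rw [hSj]; ring, zero_add]
    have hgm : g 0 ≤ g m := hbase m (by omega)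
    have hgjm : g m < g (m+1) := hmono m (by omega)
    have hgj : 0 < g (m+1) := lt_of_lt_of_le hg0 (hbase (m+1) le_rfl)
    have hden : 0 < 2 * g (m+1) - g m := by nlinarith
    rw [if_neg (by omega)] at hσl
    simp only [Nat.add_sub_cancel] at hσl
    have hσl' : g (m+1) ≤ σ * (2 * g (m+1) - g m) := by
      rw [div_le_iff₀ hden] at hσl; linarith
    have hσ0 : 0 ≤ σ := le_trans (div_nonneg hgj.le hden.le) hσl
    have hgm0 : 0 ≤ g m := le_trans hg0.le hgm
    have h1 : σ^2 * g m ≤ σ * g m := by nlinarith [mul_nonneg (mul_nonneg hσ0 (sub_nonneg.2 hσu)) hgm0]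
    have hcoef : 0 ≤ (1/2) * (g (m+1) - g m) * σ^2 + (σ - 1/2 - (1/2) * σ^2) * g (m+1) := by
      nlinarith [h1, hσl']
    have hsumpos : 0 ≤ ∑ s ∈ Finset.range m, (1/2) * (g (s+1) - g s) * (S (s+1) + σ * x)^2 := by
      apply Finset.sum_nonneg
      intro s hs
      rw [Finset.mem_range] at hs
      have h2 := hmono s (by omega)
      exact mul_nonneg (mul_nonneg (by norm_num) (by linarith)) (sq_nonneg _)
    nlinarith [hsumpos, mul_nonneg (show (0:ℝ) ≤ (1/2) * g 0 by positivity) (sq_nonneg (S 0 + σ * x)),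
      mul_nonneg hcoef (sq_nonneg x)]


lemma mono_base (g : ℕ → ℝ) (j : ℕ) (hmono : ∀ s < j, g s < g (s+1)) :
    ∀ t ≤ j, g 0 ≤ g t := by
  intro t
  induction t with
  | zero => intro _; exact le_rfl
  | succ t ih => intro ht; exact le_trans (ih (by omega)) (le_of_lt (hmono t (by omega)))

lemma gridInner_self_nonneg (h : ℝ) (N : ℕ) (u : ℕ → ℝ) (hh : 0 ≤ h) :
    0 ≤ gridInner h N u u :=
  Finset.sum_nonneg fun i _ => mul_nonneg (mul_self_nonneg _) hh

lemma gridInner_cs (h : ℝ) (N : ℕ) (u w : ℕ → ℝ) (hh : 0 ≤ h) :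
    gridInner h N u w ≤
      Real.sqrt (gridInner h N u u) * Real.sqrt (gridInner h N w w) := by
  have hsq : (gridInner h N u w)^2 ≤ gridInner h N u u * gridInner h N w w := by
    have e1 : gridInner h N u w =
        ∑ i ∈ Finset.Ico 1 N, (u i * Real.sqrt h) * (w i * Real.sqrt h) := by
      refine Finset.sum_congr rfl fun i _ => ?_
      have : Real.sqrt h * Real.sqrt h = h := Real.mul_self_sqrt hh
      calc u i * w i * h = u i * w i * (Real.sqrt h * Real.sqrt h) := by rw [this]
        _ = (u i * Real.sqrt h) * (w i * Real.sqrt h) := by ring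
    have e2 : gridInner h N u u = ∑ i ∈ Finset.Ico 1 N, (u i * Real.sqrt h)^2 := by
      refine Finset.sum_congr rfl fun i _ => ?_
      have : Real.sqrt h * Real.sqrt h = h := Real.mul_self_sqrt hh
      calc u i * u i * h = u i * u i * (Real.sqrt h * Real.sqrt h) := by rw [this]
        _ = (u i * Real.sqrt h)^2 := by ring
    have e3 : gridInner h N w w = ∑ i ∈ Finset.Ico 1 N, (w i * Real.sqrt h)^2 := by
      refine Finset.sum_congr rfl fun i _ => ?_
      have : Real.sqrt h * Real.sqrt h = h := Real.mul_self_sqrt hh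
      calc w i * w i * h = w i * w i * (Real.sqrt h * Real.sqrt h) := by rw [this]
        _ = (w i * Real.sqrt h)^2 := by ring
    rw [e1, e2, e3]
    exact Finset.sum_mul_sq_le_sq_mul_sq _ _ _
  calc gridInner h N u w ≤ |gridInner h N u w| := le_abs_self _
    _ = Real.sqrt ((gridInner h N u w)^2) := (Real.sqrt_sq_eq_abs _).symm
    _ ≤ Real.sqrt (gridInner h N u u * gridInner h N w w) := Real.sqrt_le_sqrt hsq
    _ = _ := Real.sqrt_mul (gridInner_self_nonneg h N u hh) _

set_option maxHeartbeats 1000000 in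
/-- Theorem 2 (Alikhanov, L2-1_σ paper): convergence of the general difference scheme.
Under the stability hypotheses, if the error scheme starts from `z^0 = 0` and the residuals
satisfy `‖ψ^k‖₀ ≤ C (N^{−r₁} + M^{−r₂})`, then
`‖z^{j+1}‖₀ ≤ (2κc₂)^{−1/2} max_{1≤k≤M} ‖ψ^k‖₀ ≤ C (2κc₂)^{−1/2} (N^{−r₁} + M^{−r₂})`. -/
theorem theorem2_convergence (l h κ c₂ C r₁ r₂ : ℝ) (N M : ℕ)
    (hN : 0 < N) (hM : 0 < M) (hl : 0 < l) (hh : h = l / N)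
    (hκ : 0 < κ) (hc₂ : 0 < c₂) (hC : 0 < C) (hr₁ : 0 < r₁) (hr₂ : 0 < r₂)
    (g : ℕ → ℕ → ℝ) (σ : ℕ → ℝ) (z ψ : ℕ → ℕ → ℝ)
    (Λ : (ℕ → ℝ) → (ℕ → ℝ)) (hΛ : IsLinearMap ℝ Λ)
    (hΛpos : ∀ u : ℕ → ℝ, u 0 = 0 → u N = 0 →
      gridInner h N (fun i => -(Λ u i)) u ≥ κ * gridInner h N u u)
    (hgmono : ∀ j < M, ∀ s < j, g j s < g j (s + 1))
    (hg0 : ∀ j < M, c₂ ≤ g j 0)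
    (hσl : ∀ j < M, g j j / (2 * g j j - if j = 0 then 0 else g j (j - 1)) ≤ σ j)
    (hσu : ∀ j < M, σ j ≤ 1)
    (hbc : ∀ j ≤ M, z j 0 = 0 ∧ z j N = 0)
    (hz0 : ∀ i, z 0 i = 0)
    (hscheme : ∀ j < M, ∀ i, 1 ≤ i → i < N →
      ∑ s ∈ Finset.range (j + 1), (z (s + 1) i - z s i) * g j s =
        Λ (fun x => σ j * z (j + 1) x + (1 - σ j) * z j x) i + ψ (j + 1) i)
    (hψ : ∀ k, 1 ≤ k → k ≤ M →
      Real.sqrt (gridInner h N (ψ k) (ψ k)) ≤ C * ((N : ℝ) ^ (-r₁) + (M : ℝ) ^ (-r₂))) :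
    ∀ j < M,
      Real.sqrt (gridInner h N (z (j + 1)) (z (j + 1))) ≤
        (2 * κ * c₂) ^ (-(1 : ℝ) / 2) *
          (Finset.Icc 1 M).sup' (Finset.nonempty_Icc.mpr hM)
            (fun k => Real.sqrt (gridInner h N (ψ k) (ψ k))) ∧
      (2 * κ * c₂) ^ (-(1 : ℝ) / 2) *
          (Finset.Icc 1 M).sup' (Finset.nonempty_Icc.mpr hM)
            (fun k => Real.sqrt (gridInner h N (ψ k) (ψ k))) ≤
        C * (2 * κ * c₂) ^ (-(1 : ℝ) / 2) * ((N : ℝ) ^ (-r₁) + (M : ℝ) ^ (-r₂)) := by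
  have h0 : 0 < h := by
    rw [hh]; exact div_pos hl (by exact_mod_cast hN)
  set E : ℕ → ℝ := fun s => gridInner h N (z s) (z s) with hE
  have hE0 : E 0 = 0 := by
    simp only [hE, gridInner, hz0, zero_mul, Finset.sum_const_zero]
  have hEnn : ∀ s, 0 ≤ E s := fun s => gridInner_self_nonneg h N (z s) h0.le
  set P : ℝ := (Finset.Icc 1 M).sup' (Finset.nonempty_Icc.mpr hM)
      (fun k => Real.sqrt (gridInner h N (ψ k) (ψ k))) with hP
  have hPnn : 0 ≤ P := by
    rw [hP]
    refine le_trans (Real.sqrt_nonneg (gridInner h N (ψ 1) (ψ 1))) ?_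
    exact Finset.le_sup' (f := fun k => Real.sqrt (gridInner h N (ψ k) (ψ k)))
      (show 1 ∈ Finset.Icc 1 M from Finset.mem_Icc.mpr ⟨le_rfl, hM⟩)
  set D : ℝ := P^2 / (2 * κ * c₂) with hD
  have hDnn : 0 ≤ D := by positivity
  -- the main energy estimate for a single time step
  have hstep : ∀ j < M, g j j * E (j+1) ≤
      (∑ s ∈ Finset.range j, (g j (s+1) - g j s) * E (s+1)) +
        gridInner h N (ψ (j+1)) (ψ (j+1)) / (2*κ) := by
    intro j hj
    set v : ℕ → ℝ := fun i => σ j * z (j+1) i + (1 - σ j) * z j i with hv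
    have hv0 : v 0 = 0 := by
      simp [hv, (hbc j hj.le).1, (hbc (j+1) hj).1]
    have hvN : v N = 0 := by
      simp [hv, (hbc j hj.le).2, (hbc (j+1) hj).2]
    -- lower bound of the inner product by the energy differences
    have key1 : (1/2) * ∑ s ∈ Finset.range (j+1), g j s * (E (s+1) - E s) ≤
        gridInner h N (fun i => ∑ s ∈ Finset.range (j+1), (z (s+1) i - z s i) * g j s) v := by
      have heq : (1/2) * ∑ s ∈ Finset.range (j+1), g j s * (E (s+1) - E s) =
          ∑ i ∈ Finset.Ico 1 N,
            ((1/2) * ∑ s ∈ Finset.range (j+1), g j s * ((z (s+1) i)^2 - (z s i)^2)) * h := by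
        have swap : ∑ i ∈ Finset.Ico 1 N,
            ((1/2) * ∑ s ∈ Finset.range (j+1), g j s * ((z (s+1) i)^2 - (z s i)^2)) * h
            = ∑ s ∈ Finset.range (j+1), ∑ i ∈ Finset.Ico 1 N,
                (1/2) * (g j s * ((z (s+1) i)^2 - (z s i)^2)) * h := by
          rw [Finset.sum_comm]
          refine Finset.sum_congr rfl fun i _ => ?_
          rw [Finset.mul_sum, Finset.sum_mul]
        rw [swap, Finset.mul_sum]
        refine Finset.sum_congr rfl fun s _ => ?_
        simp only [hE, gridInner]
        rw [← Finset.sum_sub_distrib, Finset.mul_sum, Finset.mul_sum]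
        exact Finset.sum_congr rfl fun i _ => by ring
      rw [heq]
      unfold gridInner
      refine Finset.sum_le_sum fun i _ => ?_
      refine mul_le_mul_of_nonneg_right ?_ h0.le
      exact scalar_key j (g j) (σ j) (fun s => z s i) (hgmono j hj)
        (lt_of_lt_of_le hc₂ (hg0 j hj)) (hσl j hj) (hσu j hj)
    -- use the scheme
    have key2 : gridInner h N
        (fun i => ∑ s ∈ Finset.range (j+1), (z (s+1) i - z s i) * g j s) v =
        gridInner h N (fun i => Λ v i + ψ (j+1) i) v := by
      unfold gridInner
      refine Finset.sum_congr rfl fun i hi => ?_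
      rw [Finset.mem_Ico] at hi
      simp only [hv]
      rw [hscheme j hj i hi.1 hi.2]
    have key3 : gridInner h N (fun i => Λ v i + ψ (j+1) i) v =
        gridInner h N (Λ v) v + gridInner h N (ψ (j+1)) v := by
      unfold gridInner
      rw [← Finset.sum_add_distrib]
      exact Finset.sum_congr rfl fun i _ => by ring
    have key4 : gridInner h N (Λ v) v ≤ -(κ * gridInner h N v v) := by
      have hneg : gridInner h N (fun i => -(Λ v i)) v = - gridInner h N (Λ v) v := by
        unfold gridInner
        rw [← Finset.sum_neg_distrib]
        exact Finset.sum_congr rfl fun i _ => by ring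
      have := hΛpos v hv0 hvN
      rw [hneg] at this
      linarith
    have key5 : gridInner h N (ψ (j+1)) v ≤
        κ * gridInner h N v v + gridInner h N (ψ (j+1)) (ψ (j+1)) / (4*κ) := by
      have hcs := gridInner_cs h N (ψ (j+1)) v h0.le
      set a := Real.sqrt (gridInner h N (ψ (j+1)) (ψ (j+1))) with ha
      set b := Real.sqrt (gridInner h N v v) with hb
      have ha2 : a^2 = gridInner h N (ψ (j+1)) (ψ (j+1)) :=
        Real.sq_sqrt (gridInner_self_nonneg h N _ h0.le)
      have hb2 : b^2 = gridInner h N v v :=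
        Real.sq_sqrt (gridInner_self_nonneg h N _ h0.le)
      have : a * b ≤ κ * b^2 + a^2 / (4*κ) := by
        have hdiff : κ * b^2 + a^2 / (4*κ) - a * b = (a - 2*κ*b)^2 / (4*κ) := by
          field_simp
          ring
        have hnn : 0 ≤ (a - 2*κ*b)^2 / (4*κ) :=
          div_nonneg (sq_nonneg _) (by linarith)
        linarith
      rw [ha2, hb2] at this
      linarith
    have hmain : (1/2) * ∑ s ∈ Finset.range (j+1), g j s * (E (s+1) - E s) ≤
        gridInner h N (ψ (j+1)) (ψ (j+1)) / (4*κ) := by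
      calc (1/2) * ∑ s ∈ Finset.range (j+1), g j s * (E (s+1) - E s)
          ≤ gridInner h N (fun i => ∑ s ∈ Finset.range (j+1), (z (s+1) i - z s i) * g j s) v := key1
        _ = gridInner h N (Λ v) v + gridInner h N (ψ (j+1)) v := by rw [key2, key3]
        _ ≤ gridInner h N (ψ (j+1)) (ψ (j+1)) / (4*κ) := by linarith [key4, key5]
    -- Abel summation on the energy differences
    have habel : ∑ s ∈ Finset.range (j+1), g j s * (E (s+1) - E s) =
        g j j * E (j+1) - g j 0 * E 0 -
          ∑ s ∈ Finset.range j, (g j (s+1) - g j s) * E (s+1) := by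
      have h1 := abel_sum (g j) E (j+1)
      rw [Finset.sum_range_succ ((fun s => (g j (s+1) - g j s) * E (s+1))) j] at h1
      have hflip : ∑ s ∈ Finset.range (j+1), g j s * (E (s+1) - E s) =
          - ∑ s ∈ Finset.range (j+1), g j s * (E s - E (s+1)) := by
        rw [← Finset.sum_neg_distrib]
        exact Finset.sum_congr rfl fun s _ => by ring
      rw [hflip, h1]; ring
    rw [habel, hE0, mul_zero, sub_zero] at hmain
    have hhalf : gridInner h N (ψ (j+1)) (ψ (j+1)) / (2*κ) =
        2 * (gridInner h N (ψ (j+1)) (ψ (j+1)) / (4*κ)) := by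
      field_simp
      ring
    rw [hhalf]
    linarith
  -- induction: all energies are bounded by D
  have hgbase : ∀ j < M, ∀ t ≤ j, g j 0 ≤ g j t := by
    intro j hj
    exact mono_base (g j) j (hgmono j hj)
  have hψP : ∀ j < M, gridInner h N (ψ (j+1)) (ψ (j+1)) ≤ P^2 := by
    intro j hj
    have h1 : Real.sqrt (gridInner h N (ψ (j+1)) (ψ (j+1))) ≤ P := by
      rw [hP]
      exact Finset.le_sup' (f := fun k => Real.sqrt (gridInner h N (ψ k) (ψ k)))
        (show j+1 ∈ Finset.Icc 1 M from Finset.mem_Icc.mpr ⟨by omega, by omega⟩)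
    have h2 : gridInner h N (ψ (j+1)) (ψ (j+1)) =
        (Real.sqrt (gridInner h N (ψ (j+1)) (ψ (j+1))))^2 :=
      (Real.sq_sqrt (gridInner_self_nonneg h N _ h0.le)).symm
    rw [h2]
    exact pow_le_pow_left₀ (Real.sqrt_nonneg _) h1 2
  have hbound : ∀ s, s ≤ M → E s ≤ D := by
    intro s
    induction s using Nat.strong_induction_on with
    | _ s ih =>
      cases s with
      | zero => intro _; rw [hE0]; exact hDnn
      | succ t =>
        intro htM
        have ht : t < M := by omega
        have h1 := hstep t ht
        have h2 : ∑ s ∈ Finset.range t, (g t (s+1) - g t s) * E (s+1) ≤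
            ∑ s ∈ Finset.range t, (g t (s+1) - g t s) * D := by
          refine Finset.sum_le_sum fun s hs => ?_
          rw [Finset.mem_range] at hs
          refine mul_le_mul_of_nonneg_left (ih (s+1) (by omega) (by omega)) ?_
          have := hgmono t ht s hs
          linarith
        have h3 : ∑ s ∈ Finset.range t, (g t (s+1) - g t s) * D = (g t t - g t 0) * D := by
          rw [← Finset.sum_mul, Finset.sum_range_sub (g t)]
        have h4 : gridInner h N (ψ (t+1)) (ψ (t+1)) / (2*κ) ≤ c₂ * D := by
          have : c₂ * D = P^2 / (2*κ) := by
            rw [hD]; field_simp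
          rw [this]
          have hb := hψP t ht
          have h2κ : (0:ℝ) < 2*κ := by linarith
          exact (div_le_div_iff_of_pos_right h2κ).mpr hb
        have h5 : c₂ * D ≤ g t 0 * D := mul_le_mul_of_nonneg_right (hg0 t ht) hDnn
        have hgtt : 0 < g t t :=
          lt_of_lt_of_le hc₂ (le_trans (hg0 t ht) (hgbase t ht t le_rfl))
        have h6 : g t t * E (t+1) ≤ g t t * D := by linarith
        exact le_of_mul_le_mul_left h6 hgtt
  -- conclusion
  intro j hj
  have hEj : gridInner h N (z (j+1)) (z (j+1)) ≤ D := hbound (j+1) (by omega)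
  have hsqrtD : Real.sqrt D = (Real.sqrt (2*κ*c₂))⁻¹ * P := by
    rw [hD, div_eq_mul_inv, Real.sqrt_mul (sq_nonneg P), Real.sqrt_sq hPnn, Real.sqrt_inv]
    ring
  have hrpow : (2*κ*c₂) ^ (-(1:ℝ)/2) = (Real.sqrt (2*κ*c₂))⁻¹ := by
    rw [show (-(1:ℝ)/2) = -(1/2 : ℝ) by norm_num, Real.rpow_neg (by positivity),
      ← Real.sqrt_eq_rpow]
  constructor
  · rw [hrpow]
    calc Real.sqrt (gridInner h N (z (j+1)) (z (j+1))) ≤ Real.sqrt D := Real.sqrt_le_sqrt hEj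
      _ = (Real.sqrt (2*κ*c₂))⁻¹ * P := hsqrtD
  · have hPle : P ≤ C * ((N:ℝ)^(-r₁) + (M:ℝ)^(-r₂)) := by
      rw [hP]
      exact Finset.sup'_le _ _ fun k hk => by
        rw [Finset.mem_Icc] at hk; exact hψ k hk.1 hk.2
    rw [hrpow]
    calc (Real.sqrt (2*κ*c₂))⁻¹ * P
        ≤ (Real.sqrt (2*κ*c₂))⁻¹ * (C * ((N:ℝ)^(-r₁)+(M:ℝ)^(-r₂))) :=
          mul_le_mul_of_nonneg_left hPle (by positivity)
      _ = C * (Real.sqrt (2*κ*c₂))⁻¹ * ((N:ℝ)^(-r₁)+(M:ℝ)^(-r₂)) := by ring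
end

section
/- Let 0 < α < 1, σ = 1 − α/2, and j ≥ 3. Then for every s with 1 ≤ s ≤ j−2, the consecutive difference of the L2-1_σ coefficients satisfies c_s^{(α,σ)} − c_{s+1}^{(α,σ)} > (α(1−α)(1+α)/2) (s+2+σ)^{−α−2} + α(1−α) (s+2+σ)^{−α−1} > 0. -/
open Set

/-- MVT on an interval of length 1. -/
lemma mvt1 (f f' : ℝ → ℝ) (a : ℝ)
    (hd : ∀ x ∈ Set.Icc a (a + 1), HasDerivAt f (f' x) x) :
    ∃ c ∈ Set.Ioo a (a + 1), f (a + 1) - f a = f' c := by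
  have hab : a < a + 1 := by linarith
  obtain ⟨c, hc, hceq⟩ := exists_hasDerivAt_eq_slope f f' hab
    (fun x hx => (hd x hx).continuousAt.continuousWithinAt)
    (fun x hx => hd x (Set.mem_Icc_of_Ioo hx))
  refine ⟨c, hc, ?_⟩
  rw [hceq]
  field_simp
  ring

lemma hasDerivAt_shift_rpow (r t y : ℝ) (hy : 0 < y + t) :
    HasDerivAt (fun z : ℝ => (z + t) ^ r) (r * (y + t) ^ (r - 1)) y := by
  have h := (Real.hasDerivAt_rpow_const (p := r) (Or.inl (ne_of_gt hy))).comp y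
    ((hasDerivAt_id y).add_const t)
  simpa [Function.comp_def] using h

/-- MVT for the third difference of `x ↦ x ^ r` on positive reals. -/
lemma third_diff_mvt (r a : ℝ) (ha : 0 < a) :
    ∃ ξ ∈ Set.Ioo a (a + 3),
      (a + 3) ^ r - 3 * (a + 2) ^ r + 3 * (a + 1) ^ r - a ^ r
        = r * (r - 1) * (r - 2) * ξ ^ (r - 3) := by
  obtain ⟨c1, hc1, e1⟩ := mvt1
    (fun y => (y + 2) ^ r - 2 * ((y + 1) ^ r) + (y + 0) ^ r)
    (fun y => (r * (y + 2) ^ (r - 1) - 2 * (r * (y + 1) ^ (r - 1)) + r * (y + 0) ^ (r - 1))) a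
    (by
      intro y hy
      have hy0 : 0 < y := lt_of_lt_of_le ha hy.1
      exact ((hasDerivAt_shift_rpow r 2 y (by linarith)).sub
        ((hasDerivAt_shift_rpow r 1 y (by linarith)).const_mul 2)).add
        (hasDerivAt_shift_rpow r 0 y (by linarith)))
  have hc10 : 0 < c1 := lt_trans ha hc1.1
  obtain ⟨c2, hc2, e2⟩ := mvt1
    (fun y => (y + 1) ^ (r - 1) - (y + 0) ^ (r - 1))
    (fun y => (r - 1) * (y + 1) ^ (r - 1 - 1) - (r - 1) * (y + 0) ^ (r - 1 - 1)) c1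
    (by
      intro y hy
      have hy0 : 0 < y := lt_of_lt_of_le hc10 hy.1
      exact (hasDerivAt_shift_rpow (r - 1) 1 y (by linarith)).sub
        (hasDerivAt_shift_rpow (r - 1) 0 y (by linarith)))
  have hc20 : 0 < c2 := lt_trans hc10 hc2.1
  obtain ⟨c3, hc3, e3⟩ := mvt1
    (fun y => (y + 0) ^ (r - 1 - 1))
    (fun y => (r - 1 - 1) * (y + 0) ^ (r - 1 - 1 - 1)) c2
    (by
      intro y hy
      have hy0 : 0 < y := lt_of_lt_of_le hc20 hy.1
      exact hasDerivAt_shift_rpow (r - 1 - 1) 0 y (by linarith))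
  refine ⟨c3, ⟨lt_trans (lt_trans hc1.1 hc2.1) hc3.1, ?_⟩, ?_⟩
  · have := hc3.2; have := hc2.2; have := hc1.2; linarith
  · simp only [add_zero] at e1 e2 e3
    have eA : (a + 3) ^ r - 3 * (a + 2) ^ r + 3 * (a + 1) ^ r - a ^ r
        = r * ((c1 + 2) ^ (r - 1) - 2 * (c1 + 1) ^ (r - 1) + c1 ^ (r - 1)) := by
      have h1 : (a + 1 + 2) = a + 3 := by ring
      have h2 : (a + 1 + 1) = a + 2 := by ring
      rw [h1, h2] at e1
      linarith [e1]
    have eB : (c1 + 2) ^ (r - 1) - 2 * (c1 + 1) ^ (r - 1) + c1 ^ (r - 1)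
        = (r - 1) * ((c2 + 1) ^ (r - 1 - 1) - c2 ^ (r - 1 - 1)) := by
      have h1 : (c1 + 1 + 1) = c1 + 2 := by ring
      rw [h1] at e2
      linarith [e2]
    have h3 : r - 1 - 1 - 1 = r - 3 := by ring
    have h4 : r - 1 - 1 = r - 2 := by ring
    rw [eA, eB, e3, h3]
    ring


/-- The coefficients `a_l^{(α,σ)}` of the L2-1_σ formula. -/
noncomputable def aCoeff (α σ : ℝ) (l : ℕ) : ℝ :=
  if l = 0 then σ ^ (1 - α)
  else ((l : ℝ) + σ) ^ (1 - α) - ((l : ℝ) - 1 + σ) ^ (1 - α)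

/-- The coefficients `b_l^{(α,σ)}` of the L2-1_σ formula (for `l ≥ 1`). -/
noncomputable def bCoeff (α σ : ℝ) (l : ℕ) : ℝ :=
  (1 / (2 - α)) * (((l : ℝ) + σ) ^ (2 - α) - ((l : ℝ) - 1 + σ) ^ (2 - α)) -
    (1 / 2) * (((l : ℝ) + σ) ^ (1 - α) + ((l : ℝ) - 1 + σ) ^ (1 - α))

/-- The coefficients `c_s^{(α,σ)}` (for `0 ≤ s ≤ j`) of the L2-1_σ formula:
`c_0 = a_0` if `j = 0`; for `j ≥ 1`, `c_0 = a_0 + b_1`,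
`c_s = a_s + b_{s+1} − b_s` for `1 ≤ s ≤ j−1`, and `c_j = a_j − b_j`. -/
noncomputable def cCoeff (α σ : ℝ) (j s : ℕ) : ℝ :=
  if j = 0 then σ ^ (1 - α)
  else if s = 0 then aCoeff α σ 0 + bCoeff α σ 1
  else if s < j then aCoeff α σ s + bCoeff α σ (s + 1) - bCoeff α σ s
  else aCoeff α σ s - bCoeff α σ s

/-- Lemma 4, proof of (4.103), middle-range estimate (Alikhanov, L2-1_σ paper): for
`0 < α < 1`, `σ = 1 − α/2`, `j ≥ 3` and `1 ≤ s ≤ j − 2`,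
`c_s − c_{s+1} > (α(1−α)(1+α)/2)(s+2+σ)^{−α−2} + α(1−α)(s+2+σ)^{−α−1} > 0`. -/
theorem c_coeff_consecutive_difference (α σ : ℝ) (hα0 : 0 < α) (hα1 : α < 1)
    (hσ : σ = 1 - α / 2) (j s : ℕ) (hj : 3 ≤ j) (hs1 : 1 ≤ s) (hs2 : s ≤ j - 2) :
    cCoeff α σ j s - cCoeff α σ j (s + 1) >
        (α * (1 - α) * (1 + α) / 2) * ((s : ℝ) + 2 + σ) ^ (-α - 2) +
          α * (1 - α) * ((s : ℝ) + 2 + σ) ^ (-α - 1) ∧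
      (α * (1 - α) * (1 + α) / 2) * ((s : ℝ) + 2 + σ) ^ (-α - 2) +
          α * (1 - α) * ((s : ℝ) + 2 + σ) ^ (-α - 1) > 0 := by
  have hj0 : j ≠ 0 := by omega
  have hs0 : s ≠ 0 := by omega
  have hs10 : s + 1 ≠ 0 := by omega
  have hslt : s < j := by omega
  have hs1lt : s + 1 < j := by omega
  have h2α : (2 : ℝ) - α ≠ 0 := by linarith
  have hσ0 : 0 < σ := by rw [hσ]; linarith
  have hs1R : (1 : ℝ) ≤ (s : ℝ) := by exact_mod_cast hs1
  have ha : 0 < (s : ℝ) - 1 + σ := by linarith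
  -- the two third differences
  set P : ℝ := ((s : ℝ) + 2 + σ) ^ (1 - α) - 3 * (((s : ℝ) + 1 + σ) ^ (1 - α))
      + 3 * (((s : ℝ) + σ) ^ (1 - α)) - ((s : ℝ) - 1 + σ) ^ (1 - α) with hP
  set Q : ℝ := ((s : ℝ) + 2 + σ) ^ (2 - α) - 3 * (((s : ℝ) + 1 + σ) ^ (2 - α))
      + 3 * (((s : ℝ) + σ) ^ (2 - α)) - ((s : ℝ) - 1 + σ) ^ (2 - α) with hQ
  have hid : cCoeff α σ j s - cCoeff α σ j (s + 1) = (1 / 2) * P - (1 / (2 - α)) * Q := by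
    rw [hP, hQ]
    simp only [cCoeff, aCoeff, bCoeff, if_neg hj0, if_neg hs0, if_neg hs10, if_pos hslt,
      if_pos hs1lt]
    push_cast
    ring_nf
  obtain ⟨ξ₁, hξ₁, eP⟩ := third_diff_mvt (1 - α) ((s : ℝ) - 1 + σ) ha
  obtain ⟨ξ₂, hξ₂, eQ⟩ := third_diff_mvt (2 - α) ((s : ℝ) - 1 + σ) ha
  rw [show (s : ℝ) - 1 + σ + 3 = (s : ℝ) + 2 + σ from by ring,
    show (s : ℝ) - 1 + σ + 2 = (s : ℝ) + 1 + σ from by ring,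
    show (s : ℝ) - 1 + σ + 1 = (s : ℝ) + σ from by ring,
    show (1 : ℝ) - α - 3 = -α - 2 from by ring] at eP
  rw [show (s : ℝ) - 1 + σ + 3 = (s : ℝ) + 2 + σ from by ring,
    show (s : ℝ) - 1 + σ + 2 = (s : ℝ) + 1 + σ from by ring,
    show (s : ℝ) - 1 + σ + 1 = (s : ℝ) + σ from by ring,
    show (2 : ℝ) - α - 3 = -α - 1 from by ring] at eQ
  have hξ₁0 : 0 < ξ₁ := lt_trans ha hξ₁.1
  have hξ₂0 : 0 < ξ₂ := lt_trans ha hξ₂.1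
  have hξ₁lt : ξ₁ < (s : ℝ) + 2 + σ := by have := hξ₁.2; linarith
  have hξ₂lt : ξ₂ < (s : ℝ) + 2 + σ := by have := hξ₂.2; linarith
  have hPval : P = (1 - α) * (1 - α - 1) * (1 - α - 2) * ξ₁ ^ (-α - 2) := eP
  have hQval : Q = (2 - α) * (2 - α - 1) * (2 - α - 2) * ξ₂ ^ (-α - 1) := eQ
  have hc1 : 0 < α * (1 - α) * (1 + α) / 2 := by
    have : 0 < 1 - α := by linarith
    have : 0 < 1 + α := by linarith
    positivity
  have hc2 : 0 < α * (1 - α) := by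
    have : 0 < 1 - α := by linarith
    positivity
  have hid2 : cCoeff α σ j s - cCoeff α σ j (s + 1) =
      (α * (1 - α) * (1 + α) / 2) * ξ₁ ^ (-α - 2) + α * (1 - α) * ξ₂ ^ (-α - 1) := by
    rw [hid, hPval, hQval]
    field_simp
    ring
  have hmono1 : ((s : ℝ) + 2 + σ) ^ (-α - 2) < ξ₁ ^ (-α - 2) :=
    Real.rpow_lt_rpow_of_neg hξ₁0 hξ₁lt (by linarith)
  have hmono2 : ((s : ℝ) + 2 + σ) ^ (-α - 1) < ξ₂ ^ (-α - 1) :=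
    Real.rpow_lt_rpow_of_neg hξ₂0 hξ₂lt (by linarith)
  have hb0 : (0 : ℝ) < (s : ℝ) + 2 + σ := by linarith
  have hpos1 : (0 : ℝ) < ((s : ℝ) + 2 + σ) ^ (-α - 2) := Real.rpow_pos_of_pos hb0 _
  have hpos2 : (0 : ℝ) < ((s : ℝ) + 2 + σ) ^ (-α - 1) := Real.rpow_pos_of_pos hb0 _
  constructor
  · rw [hid2]
    have t1 := mul_lt_mul_of_pos_left hmono1 hc1
    have t2 := mul_lt_mul_of_pos_left hmono2 hc2
    linarith
  · exact add_pos (mul_pos hc1 hpos1) (mul_pos hc2 hpos2)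
end
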